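/- Let A ∈ ℝ^{n×n}, B ∈ ℝ^{n×m}, C ∈ ℝ^{p×n}, M, M₀ ∈ Sym(n,ℝ) with M₀ a solution of the algebraic Riccati equation 0 = AᵀM₀ + M₀A + M₀BBᵀM₀ + CᵀC and M − M₀ negative definite. If Q¹¹ : [0,T) → Sym(n,ℝ) solves Q̇¹¹_t = AᵀQ¹¹_t + Q¹¹_tA + Q¹¹_tBBᵀQ¹¹_t + CᵀC with Q¹¹₀ = M, then Q¹¹_t − M₀ is negative semidefinite for all t ∈ [0,T). -/

import Mathlib

open Matrix

private lemma riccati_quad_abs_bound {n : ℕ} (X : Matrix (Fin n) (Fin n) ℝ) {v : Fin n → ℝ}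
    (hv : ∀ i, |v i| ≤ 1) : v ⬝ᵥ X *ᵥ v ≤ ∑ i, ∑ j, |X i j| := by
  calc v ⬝ᵥ X *ᵥ v = ∑ i, ∑ j, v i * (X i j * v j) := by
        simp [dotProduct, mulVec, Finset.mul_sum]
    _ ≤ ∑ i, ∑ j, |X i j| := by
        refine Finset.sum_le_sum fun i _ => Finset.sum_le_sum fun j _ => ?_
        calc v i * (X i j * v j) ≤ |v i * (X i j * v j)| := le_abs_self _
          _ = |v i| * |X i j| * |v j| := by rw [abs_mul, abs_mul]; ring
          _ ≤ 1 * |X i j| * 1 := by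
              gcongr
              exacts [hv i, hv j]
          _ = |X i j| := by ring

private lemma riccati_quad_le_smul {n : ℕ} {X : Matrix (Fin n) (Fin n) ℝ} {a : ℝ}
    (h : ∀ v : Fin n → ℝ, v ⬝ᵥ v = 1 → v ⬝ᵥ X *ᵥ v ≤ a) (w : Fin n → ℝ) :
    w ⬝ᵥ X *ᵥ w ≤ a * (w ⬝ᵥ w) := by
  rcases eq_or_ne w 0 with rfl | hw
  · simp
  · have hnn : 0 ≤ w ⬝ᵥ w := Finset.sum_nonneg fun i _ => mul_self_nonneg (w i)
    have hpos : 0 < w ⬝ᵥ w := lt_of_le_of_ne hnn (fun hcon => hw (dotProduct_self_eq_zero.mp hcon.symm))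
    set r : ℝ := Real.sqrt (w ⬝ᵥ w) with hr
    have hrpos : 0 < r := Real.sqrt_pos.mpr hpos
    have hr2 : r * r = w ⬝ᵥ w := Real.mul_self_sqrt hnn
    have hunit : (r⁻¹ • w) ⬝ᵥ (r⁻¹ • w) = 1 := by
      rw [smul_dotProduct, dotProduct_smul, smul_eq_mul, smul_eq_mul]
      field_simp
      nlinarith
    have hq := h _ hunit
    rw [smul_dotProduct, mulVec_smul, dotProduct_smul, smul_eq_mul, smul_eq_mul] at hq
    have hkey := mul_le_mul_of_nonneg_left hq (mul_pos hrpos hrpos).le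
    have hsimp : (r * r) * (r⁻¹ * (r⁻¹ * (w ⬝ᵥ X *ᵥ w))) = w ⬝ᵥ X *ᵥ w := by
      field_simp
    rw [hsimp, hr2] at hkey
    linarith

set_option maxHeartbeats 1600000 in
/-- If `M₀` solves the algebraic Riccati equation and `M − M₀ ≺ 0`, then the
Riccati solution `Q¹¹` with `Q¹¹₀ = M` satisfies `Q¹¹_t − M₀ ⪯ 0` on `[0,T)`. -/
theorem riccati_upper_bound_by_ARE {n m p : ℕ} (T : ℝ) (hT : 0 < T)
    (A : Matrix (Fin n) (Fin n) ℝ) (B : Matrix (Fin n) (Fin m) ℝ)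
    (C : Matrix (Fin p) (Fin n) ℝ) (M M₀ : Matrix (Fin n) (Fin n) ℝ)
    (hM : Mᵀ = M) (hM₀ : M₀ᵀ = M₀)
    (hARE : 0 = Aᵀ * M₀ + M₀ * A + M₀ * B * Bᵀ * M₀ + Cᵀ * C)
    (hMM₀ : (-(M - M₀)).PosDef)
    (Q11 : ℝ → Matrix (Fin n) (Fin n) ℝ)
    (hQ11sym : ∀ t, (Q11 t)ᵀ = Q11 t)
    (h11 : ∀ t ∈ Set.Ico (0:ℝ) T, ∀ i j, HasDerivAt (fun s => Q11 s i j)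
      ((Aᵀ * Q11 t + Q11 t * A + Q11 t * B * Bᵀ * Q11 t + Cᵀ * C) i j) t)
    (h110 : Q11 0 = M) :
    ∀ t ∈ Set.Ico (0:ℝ) T, (-(Q11 t - M₀)).PosSemidef := by
  classical
  have hstar : ∀ v : Fin n → ℝ, star v = v := fun v => rfl
  set W : Matrix (Fin n) (Fin n) ℝ := Aᵀ + A + B * Bᵀ * M₀ + M₀ * (B * Bᵀ) with hWdef
  set K₁ : ℝ := ∑ i, ∑ j, |W i j| with hK₁def
  set K₂ : ℝ := ∑ i, ∑ j, |(B * Bᵀ) i j| with hK₂def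
  have hK₁0 : 0 ≤ K₁ :=
    Finset.sum_nonneg fun _ _ => Finset.sum_nonneg fun _ _ => abs_nonneg _
  have hK₂0 : 0 ≤ K₂ :=
    Finset.sum_nonneg fun _ _ => Finset.sum_nonneg fun _ _ => abs_nonneg _
  set c : ℝ := K₁ + K₂ + 1 with hcdef
  have hc0 : 0 < c := by positivity
  intro t ht
  obtain ⟨ht0, htT⟩ := ht
  have hsubQ : ∀ (u : ℝ) (w : Fin n → ℝ),
      w ⬝ᵥ (Q11 u - M₀) *ᵥ w = w ⬝ᵥ Q11 u *ᵥ w - w ⬝ᵥ M₀ *ᵥ w := by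
    intro u w; rw [sub_mulVec, dotProduct_sub]
  -- the key estimate
  have key : ∀ ε : ℝ, 0 < ε → ε < Real.exp (-(c * t)) →
      ∀ u ∈ Set.Icc (0:ℝ) t, ∀ v : Fin n → ℝ, v ⬝ᵥ v = 1 →
        v ⬝ᵥ (Q11 u - M₀) *ᵥ v < ε * Real.exp (c * u) := by
    intro ε hε hεlt
    by_contra hbad
    push_neg at hbad
    obtain ⟨u₁, hu₁, v₁, hv₁, hge₁⟩ := hbad
    -- clamped time reparametrization, for continuity on all of ℝ
    set σ : ℝ → ℝ := fun s => max 0 (min s t) with hσdef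
    have hσcont : Continuous σ := continuous_const.max (continuous_id.min continuous_const)
    have hσmem : ∀ s, σ s ∈ Set.Ico (0:ℝ) T := by
      intro s
      constructor
      · exact le_max_left _ _
      · exact lt_of_le_of_lt (max_le ht0 (min_le_right s t)) htT
    have hσeq : ∀ s ∈ Set.Icc (0:ℝ) t, σ s = s := by
      intro s hs
      rw [hσdef]
      simp only [min_eq_left hs.2, max_eq_right hs.1]
    have hcont : ∀ u ∈ Set.Ico (0:ℝ) T, ∀ i j, ContinuousAt (fun s => Q11 s i j) u :=
      fun u hu i j => (h11 u hu i j).continuousAt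
    have hentry : ∀ i j, Continuous fun s => Q11 (σ s) i j := by
      intro i j
      rw [continuous_iff_continuousAt]
      intro x
      exact (hcont (σ x) (hσmem x) i j).comp hσcont.continuousAt
    set g : ℝ × (Fin n → ℝ) → ℝ :=
      fun q => q.2 ⬝ᵥ (Q11 (σ q.1) - M₀) *ᵥ q.2 - ε * Real.exp (c * q.1) with hgdef
    have hgcont : Continuous g := by
      have hrw : g = fun q => (∑ i, ∑ j, q.2 i * ((Q11 (σ q.1) i j - M₀ i j) * q.2 j))
          - ε * Real.exp (c * q.1) := by
        funext q
        simp [hgdef, dotProduct, mulVec, Matrix.sub_apply, Finset.mul_sum]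
      rw [hrw]
      refine Continuous.sub ?_
        (continuous_const.mul (Real.continuous_exp.comp (continuous_const.mul continuous_fst)))
      refine continuous_finset_sum _ fun i _ => continuous_finset_sum _ fun j _ => ?_
      exact ((continuous_apply i).comp continuous_snd).mul
        ((((hentry i j).comp continuous_fst).sub continuous_const).mul
          ((continuous_apply j).comp continuous_snd))
    set Sph : Set (Fin n → ℝ) := {v | v ⬝ᵥ v = 1} with hSphdef
    have hSphC : IsCompact Sph := by
      have hdotc : Continuous fun v : Fin n → ℝ => v ⬝ᵥ v := by
        show Continuous fun v : Fin n → ℝ => ∑ i, v i * v i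
        exact continuous_finset_sum _ fun i _ => (continuous_apply i).mul (continuous_apply i)
      have hclosed : IsClosed Sph := isClosed_eq hdotc continuous_const
      have hb : Sph ⊆ Metric.closedBall 0 1 := by
        intro v hv
        rw [Metric.mem_closedBall, dist_zero_right]
        rw [pi_norm_le_iff_of_nonneg zero_le_one]
        intro i
        rw [Real.norm_eq_abs, abs_le_one_iff_mul_self_le_one]
        calc v i * v i ≤ ∑ j, v j * v j :=
              Finset.single_le_sum (fun j _ => mul_self_nonneg (v j)) (Finset.mem_univ i)
          _ = 1 := hv
      exact (isCompact_closedBall 0 1).of_isClosed_subset hclosed hb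
    set Ks : Set (ℝ × (Fin n → ℝ)) := (Set.Icc 0 t ×ˢ Sph) ∩ {q | 0 ≤ g q} with hKsdef
    have hKsC : IsCompact Ks :=
      (isCompact_Icc.prod hSphC).inter_right (isClosed_le continuous_const hgcont)
    set Bad : Set ℝ := Prod.fst '' Ks with hBaddef
    have hBadC : IsCompact Bad := hKsC.image continuous_fst
    have hBadne : Bad.Nonempty := by
      refine ⟨u₁, ⟨(u₁, v₁), ⟨⟨hu₁, hv₁⟩, ?_⟩, rfl⟩⟩
      show 0 ≤ g (u₁, v₁)
      rw [hgdef]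
      simp only [hσeq u₁ hu₁]
      have := hge₁
      linarith
    set t₀ : ℝ := sInf Bad with ht₀def
    have ht₀Bad : t₀ ∈ Bad := hBadC.sInf_mem hBadne
    obtain ⟨q, hqKs, hq1⟩ := ht₀Bad
    obtain ⟨⟨hqIcc, hqSph⟩, hqg⟩ := hqKs
    set v : Fin n → ℝ := q.2 with hvdef
    have hv1 : v ⬝ᵥ v = 1 := hqSph
    have ht₀Icc : t₀ ∈ Set.Icc (0:ℝ) t := hq1 ▸ hqIcc
    have ht₀T : t₀ ∈ Set.Ico (0:ℝ) T := ⟨ht₀Icc.1, lt_of_le_of_lt ht₀Icc.2 htT⟩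
    have hg0 : 0 ≤ v ⬝ᵥ (Q11 t₀ - M₀) *ᵥ v - ε * Real.exp (c * t₀) := by
      have : 0 ≤ g q := hqg
      rw [hgdef] at this
      rw [← hq1]
      simpa [hσeq q.1 (hq1 ▸ ht₀Icc)] using this
    have hglb : ∀ u ∈ Bad, t₀ ≤ u := fun u hu => csInf_le hBadC.bddBelow hu
    -- strict inequality before t₀
    have hlt : ∀ u, 0 ≤ u → u < t₀ → ∀ w : Fin n → ℝ, w ⬝ᵥ w = 1 →
        w ⬝ᵥ (Q11 u - M₀) *ᵥ w < ε * Real.exp (c * u) := by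
      intro u hu0 hult w hw
      by_contra hcon
      push_neg at hcon
      have huIcc : u ∈ Set.Icc (0:ℝ) t := ⟨hu0, hult.le.trans ht₀Icc.2⟩
      have huBad : u ∈ Bad := by
        refine ⟨(u, w), ⟨⟨huIcc, hw⟩, ?_⟩, rfl⟩
        show 0 ≤ g (u, w)
        rw [hgdef]
        simp only [hσeq u huIcc]
        linarith
      exact absurd (hglb u huBad) (not_le.2 hult)
    -- t₀ is positive
    have ht₀pos : 0 < t₀ := by
      rcases lt_or_eq_of_le ht₀Icc.1 with h | h
      · exact h
      · exfalso
        have hv0 : v ≠ 0 := by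
          intro hcon
          rw [hcon] at hv1
          simp at hv1
        have hneg : v ⬝ᵥ (Q11 0 - M₀) *ᵥ v < 0 := by
          have hpd := hMM₀.dotProduct_mulVec_pos hv0
          rw [hstar v] at hpd
          have hrw : v ⬝ᵥ (-(M - M₀)) *ᵥ v = -(v ⬝ᵥ (M - M₀) *ᵥ v) := by
            rw [neg_mulVec, dotProduct_neg]
          rw [hrw] at hpd
          rw [h110]
          linarith
        rw [← h] at hg0
        have : (0:ℝ) < ε * Real.exp (c * 0) := by positivity
        linarith
    set μ : ℝ := ε * Real.exp (c * t₀) with hμdef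
    have hμpos : 0 < μ := by positivity
    have hμlt1 : μ < 1 := by
      have h1 : μ < Real.exp (-(c * t)) * Real.exp (c * t₀) :=
        mul_lt_mul_of_pos_right hεlt (Real.exp_pos _)
      have h2 : Real.exp (-(c * t)) * Real.exp (c * t₀) = Real.exp (c * t₀ - c * t) := by
        rw [← Real.exp_add]; ring_nf
      have h3 : Real.exp (c * t₀ - c * t) ≤ 1 := by
        rw [show (1:ℝ) = Real.exp 0 by simp]
        apply Real.exp_le_exp.mpr
        have := ht₀Icc.2
        nlinarith
      linarith
    -- quadratic form derivative
    set R : Matrix (Fin n) (Fin n) ℝ :=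
      Aᵀ * Q11 t₀ + Q11 t₀ * A + Q11 t₀ * B * Bᵀ * Q11 t₀ + Cᵀ * C with hRdef
    have hQform : ∀ w : Fin n → ℝ,
        HasDerivAt (fun u => w ⬝ᵥ Q11 u *ᵥ w) (w ⬝ᵥ R *ᵥ w) t₀ := by
      intro w
      have heq : (fun u => w ⬝ᵥ Q11 u *ᵥ w) = fun u => ∑ i, ∑ j, w i * (Q11 u i j * w j) := by
        funext u; simp [dotProduct, mulVec, Finset.mul_sum]
      have hval : w ⬝ᵥ R *ᵥ w = ∑ i, ∑ j, w i * (R i j * w j) := by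
        simp [dotProduct, mulVec, Finset.mul_sum]
      rw [heq, hval]
      exact HasDerivAt.fun_sum fun i _ => HasDerivAt.fun_sum fun j _ =>
        ((h11 t₀ ht₀T i j).mul_const (w j)).const_mul (w i)
    -- upper bound μ•(w⬝ᵥw) on the quadratic form at t₀
    have hub : ∀ w : Fin n → ℝ, w ⬝ᵥ (Q11 t₀ - M₀) *ᵥ w ≤ μ * (w ⬝ᵥ w) := by
      intro w
      have hφcont : ContinuousAt
          (fun u => ε * Real.exp (c * u) * (w ⬝ᵥ w) - w ⬝ᵥ (Q11 u - M₀) *ᵥ w) t₀ := by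
        have h1 : ContinuousAt (fun u => w ⬝ᵥ Q11 u *ᵥ w) t₀ := (hQform w).continuousAt
        have h2 : ContinuousAt (fun u => ε * Real.exp (c * u) * (w ⬝ᵥ w)) t₀ := by
          fun_prop
        have hrw : (fun u => ε * Real.exp (c * u) * (w ⬝ᵥ w) - w ⬝ᵥ (Q11 u - M₀) *ᵥ w)
            = fun u => ε * Real.exp (c * u) * (w ⬝ᵥ w) - (w ⬝ᵥ Q11 u *ᵥ w - w ⬝ᵥ M₀ *ᵥ w) := by
          funext u; rw [hsubQ]
        rw [hrw]
        exact h2.sub (h1.sub continuousAt_const)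
      have htend : Filter.Tendsto
          (fun u => ε * Real.exp (c * u) * (w ⬝ᵥ w) - w ⬝ᵥ (Q11 u - M₀) *ᵥ w)
          (nhdsWithin t₀ (Set.Iio t₀))
          (nhds (ε * Real.exp (c * t₀) * (w ⬝ᵥ w) - w ⬝ᵥ (Q11 t₀ - M₀) *ᵥ w)) :=
        hφcont.continuousWithinAt.tendsto
      have hev : ∀ᶠ u in nhdsWithin t₀ (Set.Iio t₀),
          0 ≤ ε * Real.exp (c * u) * (w ⬝ᵥ w) - w ⬝ᵥ (Q11 u - M₀) *ᵥ w := by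
        filter_upwards [Ioo_mem_nhdsLT_of_mem (⟨ht₀pos, le_refl t₀⟩ : t₀ ∈ Set.Ioc 0 t₀)]
          with u hu
        have hq := riccati_quad_le_smul
          (fun z hz => (hlt u hu.1.le hu.2 z hz).le) w
        linarith
      have hge := ge_of_tendsto htend hev
      rw [hμdef]
      linarith
    -- eigenvector property at t₀
    set Dm : Matrix (Fin n) (Fin n) ℝ := Q11 t₀ - M₀ with hDmdef
    clear_value Dm
    have hDsym : Dmᵀ = Dm := by rw [hDmdef, transpose_sub, hQ11sym, hM₀]
    set N : Matrix (Fin n) (Fin n) ℝ := μ • (1 : Matrix (Fin n) (Fin n) ℝ) - Dm with hNdef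
    have hNquad : ∀ x : Fin n → ℝ, x ⬝ᵥ N *ᵥ x = μ * (x ⬝ᵥ x) - x ⬝ᵥ Dm *ᵥ x := by
      intro x
      rw [hNdef, sub_mulVec, dotProduct_sub, smul_mulVec, one_mulVec,
        dotProduct_smul, smul_eq_mul]
    have hNpsd : N.PosSemidef := by
      rw [posSemidef_iff_dotProduct_mulVec]
      constructor
      · show Nᴴ = N
        have hNs : Nᵀ = N := by
          rw [hNdef, transpose_sub, transpose_smul, transpose_one, hDsym]
        exact hNs
      · intro x
        rw [hstar x, hNquad x]
        have := hub x
        linarith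
    have hNv : N *ᵥ v = 0 := by
      rw [← hNpsd.dotProduct_mulVec_zero_iff v, hstar v, hNquad v, hv1]
      have h2 : 0 ≤ v ⬝ᵥ N *ᵥ v := by
        have := hNpsd.dotProduct_mulVec_nonneg v; rwa [hstar v] at this
      rw [hNquad v, hv1] at h2
      have h4 : μ ≤ v ⬝ᵥ Dm *ᵥ v := by linarith [hg0]
      linarith
    have hDv : Dm *ᵥ v = μ • v := by
      have hrw : N *ᵥ v = μ • v - Dm *ᵥ v := by
        rw [hNdef, sub_mulVec, smul_mulVec, one_mulVec]
      rw [hrw] at hNv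
      exact (sub_eq_zero.mp hNv).symm
    have hvec : v ᵥ* Dm = μ • v := by rw [← hDsym, vecMul_transpose, hDv]
    -- algebraic identity for R
    have hQt₀ : Q11 t₀ = Dm + M₀ := by rw [hDmdef]; abel
    have hassoc : ∀ X Y : Matrix (Fin n) (Fin n) ℝ, X * B * Bᵀ * Y = X * (B * Bᵀ) * Y := by
      intro X Y
      rw [Matrix.mul_assoc X B Bᵀ]
    have hRD : R = Aᵀ * Dm + Dm * A + (Dm * (B * Bᵀ)) * Dm + Dm * (B * Bᵀ * M₀)
        + (M₀ * (B * Bᵀ)) * Dm := by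
      have hzero : Aᵀ * M₀ + M₀ * A + M₀ * (B * Bᵀ) * M₀ + Cᵀ * C = 0 := by
        rw [← hassoc M₀ M₀]
        exact hARE.symm
      rw [hRdef, hQt₀, hassoc (Dm + M₀) (Dm + M₀)]
      have expand : Aᵀ * (Dm + M₀) + (Dm + M₀) * A + (Dm + M₀) * (B * Bᵀ) * (Dm + M₀) + Cᵀ * C
          = (Aᵀ * Dm + Dm * A + (Dm * (B * Bᵀ)) * Dm + Dm * (B * Bᵀ * M₀)
            + (M₀ * (B * Bᵀ)) * Dm)
            + (Aᵀ * M₀ + M₀ * A + M₀ * (B * Bᵀ) * M₀ + Cᵀ * C) := by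
        generalize (B * Bᵀ) = E
        noncomm_ring
      rw [expand, hzero, add_zero]
    -- peeling lemmas
    have peelL : ∀ X : Matrix (Fin n) (Fin n) ℝ,
        v ⬝ᵥ (Dm * X) *ᵥ v = μ * (v ⬝ᵥ X *ᵥ v) := by
      intro X
      rw [dotProduct_mulVec, ← vecMul_vecMul, hvec, smul_vecMul, smul_dotProduct,
        smul_eq_mul, ← dotProduct_mulVec]
    have peelR : ∀ X : Matrix (Fin n) (Fin n) ℝ,
        v ⬝ᵥ (X * Dm) *ᵥ v = μ * (v ⬝ᵥ X *ᵥ v) := by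
      intro X
      rw [← mulVec_mulVec, hDv, mulVec_smul, dotProduct_smul, smul_eq_mul]
    have hRval : v ⬝ᵥ R *ᵥ v
        = μ * (v ⬝ᵥ W *ᵥ v) + μ * (μ * (v ⬝ᵥ (B * Bᵀ) *ᵥ v)) := by
      rw [hRD]
      rw [add_mulVec, add_mulVec, add_mulVec, add_mulVec,
        dotProduct_add, dotProduct_add, dotProduct_add, dotProduct_add]
      rw [peelR Aᵀ, peelL A, peelR (Dm * (B * Bᵀ)), peelL (B * Bᵀ),
        peelL (B * Bᵀ * M₀), peelR (M₀ * (B * Bᵀ))]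
      have hWexp : v ⬝ᵥ W *ᵥ v = v ⬝ᵥ Aᵀ *ᵥ v + v ⬝ᵥ A *ᵥ v
          + v ⬝ᵥ (B * Bᵀ * M₀) *ᵥ v + v ⬝ᵥ (M₀ * (B * Bᵀ)) *ᵥ v := by
        rw [hWdef, add_mulVec, add_mulVec, add_mulVec,
          dotProduct_add, dotProduct_add, dotProduct_add]
      rw [hWexp]
      ring
    -- bounds on the quadratic forms
    have habs : ∀ i, |v i| ≤ 1 := by
      intro i
      rw [abs_le_one_iff_mul_self_le_one]
      calc v i * v i ≤ ∑ j, v j * v j :=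
            Finset.single_le_sum (fun j _ => mul_self_nonneg (v j)) (Finset.mem_univ i)
        _ = 1 := hv1
    have hWb : v ⬝ᵥ W *ᵥ v ≤ K₁ := riccati_quad_abs_bound W habs
    have hBBb : v ⬝ᵥ (B * Bᵀ) *ᵥ v ≤ K₂ := riccati_quad_abs_bound _ habs
    have hBB0 : 0 ≤ v ⬝ᵥ (B * Bᵀ) *ᵥ v := by
      rw [← mulVec_mulVec, dotProduct_mulVec, ← mulVec_transpose]
      exact Finset.sum_nonneg fun i _ => mul_self_nonneg _
    have hder : v ⬝ᵥ R *ᵥ v - ε * (c * Real.exp (c * t₀)) < 0 := by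
      have hcμ : ε * (c * Real.exp (c * t₀)) = c * μ := by rw [hμdef]; ring
      have p1 : μ * (v ⬝ᵥ W *ᵥ v) ≤ μ * K₁ := mul_le_mul_of_nonneg_left hWb hμpos.le
      have p2 : μ * (v ⬝ᵥ (B * Bᵀ) *ᵥ v) ≤ K₂ := by nlinarith [hμpos, hμlt1, hBBb, hBB0]
      have p3 : μ * (μ * (v ⬝ᵥ (B * Bᵀ) *ᵥ v)) ≤ μ * K₂ := mul_le_mul_of_nonneg_left p2 hμpos.le
      rw [hRval, hcμ, hcdef]
      have : (K₁ + K₂ + 1) * μ = μ * K₁ + μ * K₂ + μ := by ring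
      rw [this]
      linarith
    -- the scalar function h and its derivative at t₀
    set hfun : ℝ → ℝ :=
      fun u => v ⬝ᵥ Q11 u *ᵥ v - v ⬝ᵥ M₀ *ᵥ v - ε * Real.exp (c * u) with hfundef
    have hexp : HasDerivAt (fun u => ε * Real.exp (c * u))
        (ε * (c * Real.exp (c * t₀))) t₀ := by
      have h1 : HasDerivAt (fun u : ℝ => c * u) c t₀ := by
        simpa using (hasDerivAt_id t₀).const_mul c
      have h2 := h1.exp
      have h3 := h2.const_mul ε
      rw [show ε * (c * Real.exp (c * t₀)) = ε * (Real.exp (c * t₀) * c) by ring]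
      exact h3
    have hh : HasDerivAt hfun (v ⬝ᵥ R *ᵥ v - ε * (c * Real.exp (c * t₀))) t₀ :=
      ((hQform v).sub_const _).sub hexp
    have hQD : v ⬝ᵥ Dm *ᵥ v = v ⬝ᵥ Q11 t₀ *ᵥ v - v ⬝ᵥ M₀ *ᵥ v := by
      rw [hDmdef, hsubQ t₀ v]
    have hht₀ : hfun t₀ = 0 := by
      show v ⬝ᵥ Q11 t₀ *ᵥ v - v ⬝ᵥ M₀ *ᵥ v - ε * Real.exp (c * t₀) = 0
      have h3 := hub v
      rw [hv1] at h3
      have hg0' := hg0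
      rw [hQD] at h3 hg0'
      rw [hμdef] at h3 hg0'
      linarith
    -- slope contradiction
    have hslope := hasDerivAt_iff_tendsto_slope.mp hh
    have hlt0 : ∀ᶠ u in nhdsWithin t₀ {t₀}ᶜ, slope hfun t₀ u < 0 :=
      hslope.eventually_lt_const hder
    have hmono : nhdsWithin t₀ (Set.Iio t₀) ≤ nhdsWithin t₀ {t₀}ᶜ :=
      nhdsWithin_mono t₀ (fun x hx => ne_of_lt hx)
    have hlt0' : ∀ᶠ u in nhdsWithin t₀ (Set.Iio t₀), slope hfun t₀ u < 0 :=
      hlt0.filter_mono hmono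
    have hmem : ∀ᶠ u in nhdsWithin t₀ (Set.Iio t₀), u ∈ Set.Ioo (0:ℝ) t₀ := by
      have := Ioo_mem_nhdsLT_of_mem (⟨ht₀pos, le_refl t₀⟩ : t₀ ∈ Set.Ioc 0 t₀)
      exact Filter.eventually_iff.mpr this
    obtain ⟨u, hsl, huIoo⟩ := (hlt0'.and hmem).exists
    rw [slope_def_field, hht₀, sub_zero] at hsl
    have hu_t₀ : u - t₀ < 0 := sub_neg.mpr huIoo.2
    have hne : u - t₀ ≠ 0 := ne_of_lt hu_t₀
    have hfu_pos : 0 < hfun u := by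
      have heq : hfun u / (u - t₀) * (u - t₀) = hfun u := div_mul_cancel₀ _ hne
      rw [← heq]
      exact mul_pos_of_neg_of_neg hsl hu_t₀
    have hcontr := hlt u huIoo.1.le huIoo.2 v hv1
    rw [hsubQ u v] at hcontr
    have hbeta : hfun u = v ⬝ᵥ Q11 u *ᵥ v - v ⬝ᵥ M₀ *ᵥ v - ε * Real.exp (c * u) := rfl
    rw [hbeta] at hfu_pos
    linarith
  -- conclusion from the key estimate
  have hunit : ∀ v : Fin n → ℝ, v ⬝ᵥ v = 1 → v ⬝ᵥ (Q11 t - M₀) *ᵥ v ≤ 0 := by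
    intro v hv
    refine le_of_forall_pos_le_add ?_
    intro δ hδ
    set ε : ℝ := min (δ * Real.exp (-(c * t))) (Real.exp (-(c * t)) / 2) with hεdef
    have hε0 : 0 < ε := lt_min (by positivity) (by positivity)
    have hεlt : ε < Real.exp (-(c * t)) :=
      (min_le_right _ _).trans_lt (half_lt_self (Real.exp_pos _))
    have hk := key ε hε0 hεlt t ⟨ht0, le_refl t⟩ v hv
    have h1 : ε * Real.exp (c * t) ≤ δ * Real.exp (-(c * t)) * Real.exp (c * t) :=
      mul_le_mul_of_nonneg_right (min_le_left _ _) (Real.exp_pos _).le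
    have h2 : δ * Real.exp (-(c * t)) * Real.exp (c * t) = δ := by
      rw [mul_assoc, ← Real.exp_add]
      simp
    linarith
  have hall : ∀ w : Fin n → ℝ, w ⬝ᵥ (Q11 t - M₀) *ᵥ w ≤ 0 := by
    intro w
    have := riccati_quad_le_smul hunit w
    simpa using this
  rw [posSemidef_iff_dotProduct_mulVec]
  constructor
  · show (-(Q11 t - M₀))ᴴ = -(Q11 t - M₀)
    show (-(Q11 t - M₀))ᵀ = -(Q11 t - M₀)
    rw [transpose_neg, transpose_sub, hQ11sym, hM₀]
  · intro x
    have hx : star x = x := rfl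
    rw [hx, neg_mulVec, dotProduct_neg]
    have := hall x
    linarith
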